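/- For a 132-avoiding permutation π = π₁ n π₂ of {1,…,n} with the maximum n at position k, the number of occurrences of the pattern 231 satisfies a₂₃₁(π) = a₂₃₁(π₁) + a₂₃₁(π₂) + a₁₂(π₁)·(n-k) + (k-1)(n-k). -/

import Mathlib

open Finset

/-- A permutation of `{1,…,n}` (modeled on `Fin n`) is 132-avoiding if there are
no indices `i < j < l` with `π i < π l < π j`. -/
def avoids132 {n : ℕ} (π : Equiv.Perm (Fin n)) : Prop :=
  ∀ i j l : Fin n, i < j → j < l → ¬(π i < π l ∧ π l < π j)

instance avoids132.dec {n : ℕ} : DecidablePred (avoids132 (n := n)) := fun π => by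
  unfold avoids132; infer_instance

/-- A permutation is 123-avoiding if there are no indices `i < j < l` with
`π i < π j < π l`. -/
def avoids123 {n : ℕ} (π : Equiv.Perm (Fin n)) : Prop :=
  ∀ i j l : Fin n, i < j → j < l → ¬(π i < π j ∧ π j < π l)

instance avoids123.dec {n : ℕ} : DecidablePred (avoids123 (n := n)) := fun π => by
  unfold avoids123; infer_instance

/-- The finite set of 132-avoiding permutations of `{1,…,n}`. -/
def AV132 (n : ℕ) : Finset (Equiv.Perm (Fin n)) := univ.filter avoids132

/-- The finite set of 123-avoiding permutations of `{1,…,n}`. -/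
def AV123 (n : ℕ) : Finset (Equiv.Perm (Fin n)) := univ.filter avoids123

/-- number of non-inversions: pairs `i < j` with `π i < π j` (pattern 12). -/
def a12 {n : ℕ} (π : Equiv.Perm (Fin n)) : ℕ :=
  (univ.filter (fun p : Fin n × Fin n => p.1 < p.2 ∧ π p.1 < π p.2)).card

/-- number of inversions: pairs `i < j` with `π j < π i` (pattern 21). -/
def a21 {n : ℕ} (π : Equiv.Perm (Fin n)) : ℕ :=
  (univ.filter (fun p : Fin n × Fin n => p.1 < p.2 ∧ π p.2 < π p.1)).card

/-- occurrences of pattern 123: triples `i < j < l` with `π i < π j < π l`. -/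
def a123 {n : ℕ} (π : Equiv.Perm (Fin n)) : ℕ :=
  (univ.filter (fun p : Fin n × Fin n × Fin n =>
    p.1 < p.2.1 ∧ p.2.1 < p.2.2 ∧ π p.1 < π p.2.1 ∧ π p.2.1 < π p.2.2)).card

/-- occurrences of pattern 321: triples `i < j < l` with `π l < π j < π i`. -/
def a321 {n : ℕ} (π : Equiv.Perm (Fin n)) : ℕ :=
  (univ.filter (fun p : Fin n × Fin n × Fin n =>
    p.1 < p.2.1 ∧ p.2.1 < p.2.2 ∧ π p.2.2 < π p.2.1 ∧ π p.2.1 < π p.1)).card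

/-- occurrences of pattern 231: triples `i < j < l` with `π l < π i < π j`. -/
def a231 {n : ℕ} (π : Equiv.Perm (Fin n)) : ℕ :=
  (univ.filter (fun p : Fin n × Fin n × Fin n =>
    p.1 < p.2.1 ∧ p.2.1 < p.2.2 ∧ π p.2.2 < π p.1 ∧ π p.1 < π p.2.1)).card

/-- occurrences of pattern 213: triples `i < j < l` with `π j < π i < π l`. -/
def a213 {n : ℕ} (π : Equiv.Perm (Fin n)) : ℕ :=
  (univ.filter (fun p : Fin n × Fin n × Fin n =>
    p.1 < p.2.1 ∧ p.2.1 < p.2.2 ∧ π p.2.1 < π p.1 ∧ π p.1 < π p.2.2)).card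

/-- occurrences of pattern 312: triples `i < j < l` with `π j < π l < π i`. -/
def a312 {n : ℕ} (π : Equiv.Perm (Fin n)) : ℕ :=
  (univ.filter (fun p : Fin n × Fin n × Fin n =>
    p.1 < p.2.1 ∧ p.2.1 < p.2.2 ∧ π p.2.1 < π p.2.2 ∧ π p.2.2 < π p.1)).card

/-- occurrences of pattern 4321: quadruples `i < j < l < m` with
`π m < π l < π j < π i`. -/
def a4321 {n : ℕ} (π : Equiv.Perm (Fin n)) : ℕ :=
  (univ.filter (fun p : Fin n × Fin n × Fin n × Fin n =>
    p.1 < p.2.1 ∧ p.2.1 < p.2.2.1 ∧ p.2.2.1 < p.2.2.2 ∧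
    π p.2.2.2 < π p.2.2.1 ∧ π p.2.2.1 < π p.2.1 ∧ π p.2.1 < π p.1)).card

/-- inversions entirely inside the prefix strictly before position `k`. -/
def a21Pre {n : ℕ} (π : Equiv.Perm (Fin n)) (k : Fin n) : ℕ :=
  (univ.filter (fun p : Fin n × Fin n =>
    p.1 < p.2 ∧ p.2 < k ∧ π p.2 < π p.1)).card

/-- inversions entirely inside the suffix strictly after position `k`. -/
def a21Suf {n : ℕ} (π : Equiv.Perm (Fin n)) (k : Fin n) : ℕ :=
  (univ.filter (fun p : Fin n × Fin n =>
    k < p.1 ∧ p.1 < p.2 ∧ π p.2 < π p.1)).card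

/-- non-inversions entirely inside the prefix strictly before position `k`. -/
def a12Pre {n : ℕ} (π : Equiv.Perm (Fin n)) (k : Fin n) : ℕ :=
  (univ.filter (fun p : Fin n × Fin n =>
    p.1 < p.2 ∧ p.2 < k ∧ π p.1 < π p.2)).card

/-- non-inversions entirely inside the suffix strictly after position `k`. -/
def a12Suf {n : ℕ} (π : Equiv.Perm (Fin n)) (k : Fin n) : ℕ :=
  (univ.filter (fun p : Fin n × Fin n =>
    k < p.1 ∧ p.1 < p.2 ∧ π p.1 < π p.2)).card

/-- 231-occurrences entirely inside the prefix strictly before position `k`. -/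
def a231Pre {n : ℕ} (π : Equiv.Perm (Fin n)) (k : Fin n) : ℕ :=
  (univ.filter (fun p : Fin n × Fin n × Fin n =>
    p.1 < p.2.1 ∧ p.2.1 < p.2.2 ∧ p.2.2 < k ∧
    π p.2.2 < π p.1 ∧ π p.1 < π p.2.1)).card

/-- 231-occurrences entirely inside the suffix strictly after position `k`. -/
def a231Suf {n : ℕ} (π : Equiv.Perm (Fin n)) (k : Fin n) : ℕ :=
  (univ.filter (fun p : Fin n × Fin n × Fin n =>
    k < p.1 ∧ p.1 < p.2.1 ∧ p.2.1 < p.2.2 ∧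
    π p.2.2 < π p.1 ∧ π p.1 < π p.2.1)).card

/-- 321-occurrences entirely inside the prefix strictly before position `k`. -/
def a321Pre {n : ℕ} (π : Equiv.Perm (Fin n)) (k : Fin n) : ℕ :=
  (univ.filter (fun p : Fin n × Fin n × Fin n =>
    p.1 < p.2.1 ∧ p.2.1 < p.2.2 ∧ p.2.2 < k ∧
    π p.2.2 < π p.2.1 ∧ π p.2.1 < π p.1)).card

/-- 321-occurrences entirely inside the suffix strictly after position `k`. -/
def a321Suf {n : ℕ} (π : Equiv.Perm (Fin n)) (k : Fin n) : ℕ :=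
  (univ.filter (fun p : Fin n × Fin n × Fin n =>
    k < p.1 ∧ p.1 < p.2.1 ∧ p.2.1 < p.2.2 ∧
    π p.2.2 < π p.2.1 ∧ π p.2.1 < π p.1)).card

/-- 4321-occurrences entirely inside the prefix strictly before position `k`. -/
def a4321Pre {n : ℕ} (π : Equiv.Perm (Fin n)) (k : Fin n) : ℕ :=
  (univ.filter (fun p : Fin n × Fin n × Fin n × Fin n =>
    p.1 < p.2.1 ∧ p.2.1 < p.2.2.1 ∧ p.2.2.1 < p.2.2.2 ∧ p.2.2.2 < k ∧
    π p.2.2.2 < π p.2.2.1 ∧ π p.2.2.1 < π p.2.1 ∧ π p.2.1 < π p.1)).card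

/-- 4321-occurrences entirely inside the suffix strictly after position `k`. -/
def a4321Suf {n : ℕ} (π : Equiv.Perm (Fin n)) (k : Fin n) : ℕ :=
  (univ.filter (fun p : Fin n × Fin n × Fin n × Fin n =>
    k < p.1 ∧ p.1 < p.2.1 ∧ p.2.1 < p.2.2.1 ∧ p.2.2.1 < p.2.2.2 ∧
    π p.2.2.2 < π p.2.2.1 ∧ π p.2.2.1 < π p.2.1 ∧ π p.2.1 < π p.1)).card

/-- For a 132-avoiding permutation with maximum at 0-based position `k`
(1-based `k+1`): `a231(π) = a231(π₁) + a231(π₂) + a12(π₁)·(n-k) + (k-1)(n-k)`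
with the paper's 1-based `k`. -/
theorem a231_decomposition {n : ℕ} (π : Equiv.Perm (Fin n))
    (hav : avoids132 π) (k : Fin n) (hmax : ∀ m : Fin n, π m ≤ π k) :
    a231 π = a231Pre π k + a231Suf π k
      + a12Pre π k * (n - (k.val + 1)) + k.val * (n - (k.val + 1)) := by
  classical
  have hmaxlt : ∀ m : Fin n, m ≠ k → π m < π k := fun m hm =>
    lt_of_le_of_ne (hmax m) (fun h => hm (π.injective h))
  have fact1 : ∀ i l : Fin n, i < k → k < l → π l < π i := by
    intro i l hik hkl
    by_contra h
    push_neg at h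
    have hne : π i ≠ π l := fun h' => absurd (π.injective h') (ne_of_lt (hik.trans hkl))
    exact hav i k l hik hkl ⟨lt_of_le_of_ne h hne, hmaxlt l (ne_of_gt hkl)⟩
  set A1 : Finset (Fin n × Fin n × Fin n) := univ.filter (fun p =>
    p.1 < p.2.1 ∧ p.2.1 < p.2.2 ∧ p.2.2 < k ∧ π p.2.2 < π p.1 ∧ π p.1 < π p.2.1) with hA1
  set A2 : Finset (Fin n × Fin n × Fin n) := univ.filter (fun p =>
    k < p.1 ∧ p.1 < p.2.1 ∧ p.2.1 < p.2.2 ∧ π p.2.2 < π p.1 ∧ π p.1 < π p.2.1) with hA2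
  set A3 : Finset (Fin n × Fin n × Fin n) := univ.filter (fun p =>
    p.1 < k ∧ p.2.1 = k ∧ k < p.2.2) with hA3
  set A4 : Finset (Fin n × Fin n × Fin n) := univ.filter (fun p =>
    p.1 < p.2.1 ∧ p.2.1 < k ∧ k < p.2.2 ∧ π p.1 < π p.2.1) with hA4
  have hunion : (univ.filter (fun p : Fin n × Fin n × Fin n =>
      p.1 < p.2.1 ∧ p.2.1 < p.2.2 ∧ π p.2.2 < π p.1 ∧ π p.1 < π p.2.1))
      = ((A1 ∪ A2) ∪ A3) ∪ A4 := by
    ext p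
    simp only [hA1, hA2, hA3, hA4, mem_filter, mem_union, mem_univ, true_and]
    constructor
    · rintro ⟨h1, h2, h3, h4⟩
      rcases lt_trichotomy p.2.2 k with hc | hc | hc
      · exact Or.inl (Or.inl (Or.inl ⟨h1, h2, hc, h3, h4⟩))
      · rw [hc] at h3; exact absurd (hmax p.1) (not_le.2 h3)
      · rcases lt_trichotomy p.2.1 k with hc2 | hc2 | hc2
        · exact Or.inr ⟨h1, hc2, hc, h4⟩
        · exact Or.inl (Or.inr ⟨hc2 ▸ h1, hc2, hc⟩)
        · rcases lt_trichotomy p.1 k with hc3 | hc3 | hc3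
          · exact absurd h4 (not_lt.2 (fact1 p.1 p.2.1 hc3 hc2).le)
          · rw [hc3] at h4; exact absurd (hmax p.2.1) (not_le.2 h4)
          · exact Or.inl (Or.inl (Or.inr ⟨hc3, h1, h2, h3, h4⟩))
    · rintro (((⟨h1, h2, _, h4, h5⟩ | ⟨_, h2, h3, h4, h5⟩) | ⟨h1, h2, h3⟩) | ⟨h1, h2, h3, h4⟩)
      · exact ⟨h1, h2, h4, h5⟩
      · exact ⟨h2, h3, h4, h5⟩
      · exact ⟨h2 ▸ h1, h2 ▸ h3, fact1 p.1 p.2.2 h1 h3, h2 ▸ hmaxlt p.1 (ne_of_lt h1)⟩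
      · exact ⟨h1, h2.trans h3, fact1 p.1 p.2.2 (h1.trans h2) h3, h4⟩
  have d12 : Disjoint A1 A2 := by
    rw [Finset.disjoint_left]
    intro p hp1 hp2
    simp only [hA1, hA2, mem_filter] at hp1 hp2
    exact absurd ((hp2.2.1.trans hp2.2.2.1).trans hp2.2.2.2.1) (not_lt.2 hp1.2.2.2.1.le)
  have d3 : Disjoint (A1 ∪ A2) A3 := by
    rw [Finset.disjoint_left]
    intro p hp1 hp2
    simp only [hA1, hA2, hA3, mem_filter, mem_union] at hp1 hp2
    rcases hp1 with ⟨_, h⟩ | ⟨_, h⟩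
    · exact lt_irrefl _ (hp2.2.2.2.trans h.2.2.1)
    · exact lt_irrefl k (hp2.2.2.1 ▸ (h.1.trans h.2.1))
  have d4 : Disjoint ((A1 ∪ A2) ∪ A3) A4 := by
    rw [Finset.disjoint_left]
    intro p hp1 hp2
    simp only [hA1, hA2, hA3, hA4, mem_filter, mem_union] at hp1 hp2
    rcases hp1 with (⟨_, h⟩ | ⟨_, h⟩) | ⟨_, h⟩
    · exact lt_irrefl _ (hp2.2.2.2.1.trans h.2.2.1)
    · exact lt_irrefl _ ((h.1.trans h.2.1).trans hp2.2.2.1)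
    · exact lt_irrefl k (h.2.1 ▸ hp2.2.2.1)
  have hcard : a231 π = A1.card + A2.card + A3.card + A4.card := by
    rw [a231, hunion, Finset.card_union_of_disjoint d4, Finset.card_union_of_disjoint d3,
      Finset.card_union_of_disjoint d12]
  have hc3 : A3.card = k.val * (n - (k.val + 1)) := by
    have : A3.card = ((Iio k) ×ˢ (Ioi k)).card := by
      apply Finset.card_nbij' (fun p => (p.1, p.2.2)) (fun q => (q.1, k, q.2))
      · intro p hp
        simp only [hA3, mem_coe, mem_filter] at hp
        simp [mem_product, hp.2.1, hp.2.2.2]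
      · intro q hq
        simp only [mem_coe, mem_product, mem_Iio, mem_Ioi] at hq
        simp [hA3, hq.1, hq.2]
      · intro p hp
        simp only [hA3, mem_coe, mem_filter] at hp
        simp [← hp.2.2.1]
      · intro q _; rfl
    rw [this, card_product, Fin.card_Iio, Fin.card_Ioi]
    congr 1
    omega
  have hc4 : A4.card = a12Pre π k * (n - (k.val + 1)) := by
    have : A4.card = (((univ : Finset (Fin n × Fin n)).filter
        (fun q => q.1 < q.2 ∧ q.2 < k ∧ π q.1 < π q.2)) ×ˢ (Ioi k)).card := by
      apply Finset.card_nbij' (fun p => ((p.1, p.2.1), p.2.2)) (fun q => (q.1.1, q.1.2, q.2))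
      · intro p hp
        simp only [hA4, mem_coe, mem_filter] at hp
        simp only [mem_coe, mem_product, mem_filter, mem_univ, true_and, mem_Ioi]
        exact ⟨⟨hp.2.1, hp.2.2.1, hp.2.2.2.2⟩, hp.2.2.2.1⟩
      · intro q hq
        simp only [mem_coe, mem_product, mem_filter, mem_univ, true_and, mem_Ioi] at hq
        simp only [hA4, mem_coe, mem_filter, mem_univ, true_and]
        exact ⟨hq.1.1, hq.1.2.1, hq.2, hq.1.2.2⟩
      · intro p _; rfl
      · intro q _; rfl
    rw [this, card_product, Fin.card_Ioi, a12Pre]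
    congr 1
    omega
  have hc1 : A1.card = a231Pre π k := by rw [hA1, a231Pre]
  have hc2 : A2.card = a231Suf π k := by rw [hA2, a231Suf]
  omega
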